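/- Suppose x(λ) = D γ(λ) for λ ∈ Λ where D ∈ ℂ^{N×m}, the solution set {γ(λ)} is jointly k-sparse with support S, and the Kruskal rank of D satisfies σ(D) ≥ 2k. If V is any matrix whose column space equals span{x(λ) : λ ∈ Λ}, then the row support of any jointly k-sparse solution U of V = D U equals S; in particular the support S is determined by the finite system V = D U. -/

import Mathlib

open scoped BigOperators

/-- Kruskal-rank injectivity: a vector supported on a small set in the kernel of `D` is zero. -/
lemma kruskal_ker {N m : ℕ} (k : ℕ) (D : Matrix (Fin N) (Fin m) ℂ)
    (hKruskal : ∀ Q : Finset (Fin m), Q.card ≤ 2 * k →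
      LinearIndependent ℂ (fun q : {i // i ∈ Q} => fun r : Fin N => D r q.1))
    (Q : Finset (Fin m)) (hQ : Q.card ≤ 2 * k)
    (d : Fin m → ℂ) (hd : ∀ i, i ∉ Q → d i = 0)
    (h0 : D.mulVec d = 0) : d = 0 := by
  have hli := hKruskal Q hQ
  rw [Fintype.linearIndependent_iff] at hli
  have hsum : (∑ q : {i // i ∈ Q}, d q.1 • (fun r : Fin N => D r q.1)) = 0 := by
    funext r
    have h1 : D.mulVec d r = 0 := by rw [h0]; rfl
    have h2 : D.mulVec d r = ∑ j, D r j * d j := rfl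
    have h3 : (∑ j, D r j * d j) = ∑ j ∈ Q, D r j * d j := by
      symm
      apply Finset.sum_subset (Finset.subset_univ Q)
      intro i _ hi
      rw [hd i hi, mul_zero]
    have h4 : (∑ j ∈ Q, D r j * d j) = ∑ q : {i // i ∈ Q}, D r q.1 * d q.1 := by
      rw [← Finset.sum_attach Q (fun j => D r j * d j)]
      rfl
    simp only [Finset.sum_apply, Pi.smul_apply, smul_eq_mul, Pi.zero_apply]
    rw [← h1, h2, h3, h4]
    exact Finset.sum_congr rfl fun q _ => mul_comm _ _
  have := hli (fun q => d q.1) hsum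
  funext i
  by_cases hi : i ∈ Q
  · exact this ⟨i, hi⟩
  · exact hd i hi

open Classical in
/-- Continuous-to-finite (CTF) reduction: if the solutions `γ(λ)` of `x(λ) = D γ(λ)` are
jointly `k`-sparse with support `S`, the Kruskal rank of `D` is at least `2k`, and `V` is a
matrix whose column space equals `span{x(λ)}`, then the row support of any jointly `k`-sparse
solution `U` of `V = D U` equals `S`. -/
theorem stmt18 {N m p : ℕ} (k : ℕ)
    (D : Matrix (Fin N) (Fin m) ℂ)
    (hKruskal : ∀ Q : Finset (Fin m), Q.card ≤ 2 * k →
      LinearIndependent ℂ (fun q : {i // i ∈ Q} => fun r : Fin N => D r q.1))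
    {Λ : Type*} (γ : Λ → (Fin m → ℂ)) (x : Λ → (Fin N → ℂ))
    (hx : ∀ lam, x lam = D.mulVec (γ lam))
    (S : Finset (Fin m)) (hScard : S.card ≤ k)
    (hS : ∀ i, i ∈ S ↔ ∃ lam, γ lam i ≠ 0)
    (V : Matrix (Fin N) (Fin p) ℂ)
    (hV : Submodule.span ℂ (Set.range fun j : Fin p => fun r : Fin N => V r j) =
      Submodule.span ℂ (Set.range fun lam : Λ => x lam))
    (U : Matrix (Fin m) (Fin p) ℂ)
    (hU : V = D * U)
    (hUk : (Finset.univ.filter fun i : Fin m => ∃ j, U i j ≠ 0).card ≤ k) :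
    ∀ i : Fin m, (∃ j, U i j ≠ 0) ↔ i ∈ S := by
  set T : Finset (Fin m) := Finset.univ.filter fun i : Fin m => ∃ j, U i j ≠ 0 with hT
  have hTmem : ∀ i : Fin m, i ∈ T ↔ ∃ j, U i j ≠ 0 := by
    intro i; simp [hT]
  have hQcard : (S ∪ T).card ≤ 2 * k := by
    calc (S ∪ T).card ≤ S.card + T.card := Finset.card_union_le _ _
    _ ≤ k + k := add_le_add hScard hUk
    _ = 2 * k := (two_mul k).symm
  -- columns of V, via hU
  have hVcol : ∀ j : Fin p, (fun r : Fin N => V r j) = D.mulVec (fun l => U l j) := by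
    intro j
    funext r
    rw [hU]
    simp [Matrix.mul_apply, Matrix.mulVec, dotProduct]
  intro i
  constructor
  · -- row support of U ⊆ S
    rintro ⟨j, hUij⟩
    by_contra hiS
    -- column j of V lies in span of x, write it via a finsupp combination
    have hmem : (fun r : Fin N => V r j) ∈
        Submodule.span ℂ (Set.range fun lam : Λ => x lam) := by
      rw [← hV]
      exact Submodule.subset_span ⟨j, rfl⟩
    rw [Finsupp.mem_span_range_iff_exists_finsupp] at hmem
    obtain ⟨c, hc⟩ := hmem
    set w : Fin m → ℂ := c.sum fun lam a => a • γ lam with hw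
    have hwS : ∀ l, l ∉ S → w l = 0 := by
      intro l hl
      have hγ : ∀ lam, γ lam l = 0 := by
        intro lam
        by_contra h
        exact hl ((hS l).mpr ⟨lam, h⟩)
      simp only [hw, Finsupp.sum, Finset.sum_apply, Pi.smul_apply, smul_eq_mul]
      exact Finset.sum_eq_zero fun lam _ => by rw [hγ lam, mul_zero]
    have hDw : D.mulVec w = fun r : Fin N => V r j := by
      have : D.mulVecLin w = c.sum fun lam a => a • D.mulVec (γ lam) := by
        rw [hw, Finsupp.sum, Finsupp.sum, map_sum]
        exact Finset.sum_congr rfl fun lam _ => by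
          rw [map_smul]; rfl
      rw [show D.mulVec w = D.mulVecLin w from rfl, this]
      rw [← hc]
      exact Finset.sum_congr rfl fun lam _ => by simp [hx lam]
    -- now d = (col j of U) - w is in the kernel, supported on S ∪ T
    set d : Fin m → ℂ := (fun l => U l j) - w with hd
    have hdsupp : ∀ l, l ∉ S ∪ T → d l = 0 := by
      intro l hl
      rw [Finset.mem_union] at hl
      push_neg at hl
      have h1 : U l j = 0 := by
        by_contra h
        exact hl.2 ((hTmem l).mpr ⟨j, h⟩)
      simp [hd, h1, hwS l hl.1]
    have hDd : D.mulVec d = 0 := by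
      rw [hd]
      have : D.mulVec ((fun l => U l j) - w) = D.mulVec (fun l => U l j) - D.mulVec w := by
        simp [Matrix.mulVec_sub]
      rw [this, ← hVcol j, hDw, sub_self]
    have := kruskal_ker k D hKruskal (S ∪ T) hQcard d hdsupp hDd
    have hdi : d i = 0 := by rw [this]; rfl
    have hwi : w i = 0 := hwS i hiS
    rw [hd] at hdi
    simp [hwi] at hdi
    exact hUij hdi
  · -- S ⊆ row support of U
    intro hiS
    obtain ⟨lam, hγ⟩ := (hS i).mp hiS
    have hmem : x lam ∈
        Submodule.span ℂ (Set.range fun j : Fin p => fun r : Fin N => V r j) := by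
      rw [hV]
      exact Submodule.subset_span ⟨lam, rfl⟩
    rw [Submodule.mem_span_range_iff_exists_fun] at hmem
    obtain ⟨c, hc⟩ := hmem
    -- w = U.mulVec c
    set w : Fin m → ℂ := U.mulVec c with hw
    have hDw : D.mulVec w = x lam := by
      rw [hw, Matrix.mulVec_mulVec, ← hU, ← hc]
      funext r
      simp only [Matrix.mulVec, dotProduct, Finset.sum_apply, Pi.smul_apply, smul_eq_mul]
      exact Finset.sum_congr rfl fun j _ => mul_comm _ _
    set d : Fin m → ℂ := γ lam - w with hd
    have hdsupp : ∀ l, l ∉ S ∪ T → d l = 0 := by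
      intro l hl
      rw [Finset.mem_union] at hl
      push_neg at hl
      have h1 : γ lam l = 0 := by
        by_contra h
        exact hl.1 ((hS l).mpr ⟨lam, h⟩)
      have h2 : w l = 0 := by
        rw [hw]
        simp only [Matrix.mulVec, dotProduct]
        apply Finset.sum_eq_zero
        intro j _
        have : U l j = 0 := by
          by_contra h
          exact hl.2 ((hTmem l).mpr ⟨j, h⟩)
        rw [this, zero_mul]
      simp [hd, h1, h2]
    have hDd : D.mulVec d = 0 := by
      rw [hd, Matrix.mulVec_sub, hDw, ← hx lam, sub_self]
    have := kruskal_ker k D hKruskal (S ∪ T) hQcard d hdsupp hDd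
    have hdi : d i = 0 := by rw [this]; rfl
    rw [hd] at hdi
    have hwi : w i ≠ 0 := by
      intro h
      apply hγ
      simpa [h] using hdi
    rw [hw] at hwi
    by_contra h
    push_neg at h
    apply hwi
    simp only [Matrix.mulVec, dotProduct]
    exact Finset.sum_eq_zero fun j _ => by rw [h j, zero_mul]
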